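/- arXiv:1802.03744 — 2 statements merged into one kernel-verified Lean document; each statement's English description precedes it below -/
import Mathlib

section
/- For an object A of Set^𝕋, the unique morphism A → 1 to the terminal presheaf is invariant under clock introduction if and only if A is isomorphic to a constant presheaf (i.e. to a constant functor 𝕋 → Set). -/
open CategoryTheory CategoryTheory.Limits Opposite

/-- A time object: a finite set of clocks together with the number of ticks left on each. -/
structure TimeObj (C : Type) where
  E : Finset C
  d : {x // x ∈ E} → ℕ

/-- A morphism of time objects. -/
structure TimeHom {C : Type} (A B : TimeObj C) where
  toFun : {x // x ∈ A.E} → {x // x ∈ B.E}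
  le : ∀ x, B.d (toFun x) ≤ A.d x

theorem TimeHom.ext' {C : Type} {A B : TimeObj C} {f g : TimeHom A B}
    (h : f.toFun = g.toFun) : f = g := by
  cases f; cases g; cases h; rfl

/-- The category 𝕋 of time objects. -/
instance TimeCat (C : Type) : Category (TimeObj C) where
  Hom := TimeHom
  id _ := ⟨fun x => x, fun _ => le_rfl⟩
  comp f g := ⟨TimeHom.toFun g ∘ TimeHom.toFun f,
    fun x => le_trans (TimeHom.le g _) (TimeHom.le f _)⟩
  id_comp _ := rfl
  comp_id _ := rfl
  assoc _ _ _ := rfl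

/-- The time object `({λ}, n)`. -/
def single (C : Type) (l : C) (n : ℕ) : TimeObj C :=
  ⟨{l}, fun _ => n⟩

/-- The object of clocks 𝒞 in `Set^𝕋`. -/
def Clocks (C : Type) : TimeObj C ⥤ Type where
  obj A := {x // x ∈ A.E}
  map f := TypeCat.ofHom (TimeHom.toFun f)
  map_id _ := rfl
  map_comp _ _ := rfl

open MonoidalCategory

/-- In a category with (chosen) finite products, a morphism `p : A ⟶ B` is
*orthogonal* to an object `X` if every commuting square whose left edge is a
projection `Y ⊗ X ⟶ Y` and whose right edge is `p` has a unique diagonal filler. -/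
def OrthogonalTo {𝒞 : Type u} [Category.{v} 𝒞] [CartesianMonoidalCategory 𝒞]
    {A B : 𝒞} (p : A ⟶ B) (X : 𝒞) : Prop :=
  ∀ (Y : 𝒞) (f : Y ⊗ X ⟶ A) (g : Y ⟶ B),
    f ≫ p = CartesianMonoidalCategory.fst Y X ≫ g →
      ∃! h : Y ⟶ A, CartesianMonoidalCategory.fst Y X ≫ h = f ∧ h ≫ p = g

/-- A morphism of presheaves on 𝕋 is invariant under clock introduction if it is
orthogonal to every representable `y({λ}, n)`. -/
def InvariantUnderClockIntro {C : Type} {A B : TimeObj C ⥤ Type} (p : A ⟶ B) : Prop :=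
  ∀ (l : C) (n : ℕ), OrthogonalTo p (coyoneda.obj (op (single C l n)))

/-- The time object `(ℰ ∪ {λ}, δ[λ ↦ n])`. -/
def TimeObj.extend {C : Type} [DecidableEq C] (A : TimeObj C) (l : C) (n : ℕ) :
    TimeObj C where
  E := insert l A.E
  d x := if h : x.1 ∈ A.E then A.d ⟨x.1, h⟩ else n

/-- The inclusion `(ℰ, δ) ⟶ (ℰ ∪ {λ}, δ[λ ↦ n])`. -/
def inclExtend {C : Type} [DecidableEq C] (A : TimeObj C) (l : C) (n : ℕ) :
    A ⟶ A.extend l n :=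
  ⟨fun x => ⟨x.1, Finset.mem_insert_of_mem x.2⟩, fun x => by
    dsimp [TimeObj.extend]
    rw [if_pos x.2]⟩


/-! ### Auxiliary material -/

namespace Statement7Aux

open CartesianMonoidalCategory

variable {C : Type} [DecidableEq C]

/-- The canonical map `single l n ⟶ T.extend m n` hitting the new clock. -/
def canSigma (l : C) {T : TimeObj C} {m : C} (hm : m ∉ T.E) (n : ℕ) :
    single C l n ⟶ T.extend m n :=
  ⟨fun _ => ⟨m, Finset.mem_insert_self m T.E⟩, fun _ => by
    dsimp [TimeObj.extend, single]
    rw [dif_neg hm]⟩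

/-- Copairing: `T.extend m n` is the coproduct of `T` and `single l n`. -/
def copair {T U : TimeObj C} {m : C} (hm : m ∉ T.E) {l : C} {n : ℕ}
    (u : T ⟶ U) (σ : single C l n ⟶ U) : T.extend m n ⟶ U where
  toFun x :=
    if h : x.1 ∈ T.E then u.toFun ⟨x.1, h⟩ else σ.toFun ⟨l, Finset.mem_singleton_self l⟩
  le x := by
    dsimp [TimeObj.extend]
    by_cases h : x.1 ∈ T.E
    · rw [dif_pos h, dif_pos h]; exact TimeHom.le u ⟨x.1, h⟩
    · rw [dif_neg h, dif_neg h]; exact TimeHom.le σ ⟨l, Finset.mem_singleton_self l⟩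

theorem incl_copair {T U : TimeObj C} {m : C} (hm : m ∉ T.E) {l : C} {n : ℕ}
    (u : T ⟶ U) (σ : single C l n ⟶ U) :
    inclExtend T m n ≫ copair hm u σ = u := by
  apply TimeHom.ext'
  funext x
  exact dif_pos x.2

theorem can_copair {T U : TimeObj C} {m : C} (hm : m ∉ T.E) {l : C} {n : ℕ}
    (u : T ⟶ U) (σ : single C l n ⟶ U) :
    canSigma l hm n ≫ copair hm u σ = σ := by
  apply TimeHom.ext'
  funext x
  have hx : x = ⟨l, Finset.mem_singleton_self l⟩ :=
    Subtype.ext (Finset.mem_singleton.mp x.2)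
  rw [hx]
  exact dif_neg hm

theorem copair_incl_can {T : TimeObj C} {m : C} (hm : m ∉ T.E) (l : C) (n : ℕ) :
    copair hm (inclExtend T m n) (canSigma l hm n) = 𝟙 (T.extend m n) := by
  apply TimeHom.ext'
  funext x
  show (if h : x.1 ∈ T.E then _ else _) = x
  by_cases h : x.1 ∈ T.E
  · rw [dif_pos h]
    exact Subtype.ext rfl
  · rw [dif_neg h]
    exact Subtype.ext ((Finset.mem_insert.mp x.2).resolve_right h).symm

theorem copair_comp {T U V : TimeObj C} {m : C} (hm : m ∉ T.E) {l : C} {n : ℕ}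
    (u : T ⟶ U) (σ : single C l n ⟶ U) (v : U ⟶ V) :
    copair hm u σ ≫ v = copair hm (u ≫ v) (σ ≫ v) := by
  apply TimeHom.ext'
  funext x
  show v.toFun (if h : x.1 ∈ T.E then _ else _) = (if h : x.1 ∈ T.E then _ else _)
  by_cases h : x.1 ∈ T.E
  · rw [dif_pos h, dif_pos h]; rfl
  · rw [dif_neg h, dif_neg h]; rfl

/-- The empty time object, initial in 𝕋. -/
def emptyObj (C : Type) : TimeObj C :=
  ⟨∅, fun x => absurd x.2 (Finset.notMem_empty x.1)⟩

def emptyTo (T : TimeObj C) : emptyObj C ⟶ T :=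
  ⟨fun x => absurd x.2 (Finset.notMem_empty x.1),
   fun x => absurd x.2 (Finset.notMem_empty x.1)⟩

theorem emptyTo_unique {T : TimeObj C} (f g : emptyObj C ⟶ T) : f = g := by
  apply TimeHom.ext'
  funext x
  exact absurd x.2 (Finset.notMem_empty x.1)

theorem bij_of_iso (A : TimeObj C ⥤ Type) {T U : TimeObj C} (j : T ⟶ U) (j' : U ⟶ T)
    (h1 : j ≫ j' = 𝟙 T) (h2 : j' ≫ j = 𝟙 U) : Function.Bijective (A.map j) := by
  rw [Function.bijective_iff_has_inverse]
  refine ⟨A.map j', fun a => ?_, fun a => ?_⟩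
  · rw [← FunctorToTypes.map_comp_apply, h1, FunctorToTypes.map_id_apply]
  · rw [← FunctorToTypes.map_comp_apply, h2, FunctorToTypes.map_id_apply]

/-- A pair as an element of the tensor product in `TimeObj C ⥤ Type`. -/
def pairEl (Y X : TimeObj C ⥤ Type) {T : TimeObj C} (y : Y.obj T) (x : X.obj T) :
    (Y ⊗ X).obj T :=
  show Y.obj T × X.obj T from (y, x)


/-- First component of an element of a tensor product. -/
def fstEl (Y X : TimeObj C ⥤ Type) {T : TimeObj C} (p : (Y ⊗ X).obj T) : Y.obj T :=
  (show Y.obj T × X.obj T from p).1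

def sndEl (Y X : TimeObj C ⥤ Type) {T : TimeObj C} (p : (Y ⊗ X).obj T) : X.obj T :=
  (show Y.obj T × X.obj T from p).2

theorem bij_inclExtend {A : TimeObj C ⥤ Type}
    (hA : InvariantUnderClockIntro (Limits.terminal.from A))
    (T : TimeObj C) {m : C} (n : ℕ) (hm : m ∉ T.E) :
    Function.Bijective (A.map (inclExtend T m n)) := by
  set X := coyoneda.obj (op (single C m n)) with hX
  set Y := coyoneda.obj (op T) with hY
  constructor
  · -- injectivity
    intro a₁ a₂ hEq
    let mkh : A.obj T → (Y ⟶ A) := fun a =>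
      { app := fun U => TypeCat.ofHom (fun u => A.map u a)
        naturality := fun U V v => by
          ext u
          exact FunctorToTypes.map_comp_apply A u v a }
    let f : Y ⊗ X ⟶ A :=
      { app := fun U => TypeCat.ofHom (fun p =>
          A.map (copair hm (fstEl Y X p) (sndEl Y X p)) (A.map (inclExtend T m n) a₁))
        naturality := fun U V v => by
          ext p
          show A.map (copair hm (fstEl Y X p ≫ v) (sndEl Y X p ≫ v)) _
            = A.map v (A.map (copair hm (fstEl Y X p) (sndEl Y X p)) _)
          rw [← copair_comp, FunctorToTypes.map_comp_apply] }
    have key : ∀ a : A.obj T, A.map (inclExtend T m n) a = A.map (inclExtend T m n) a₁ →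
        CartesianMonoidalCategory.fst Y X ≫ mkh a = f ∧
          mkh a ≫ Limits.terminal.from A = Limits.terminal.from Y := by
      intro a ha
      constructor
      · apply NatTrans.ext
        funext U; ext p
        show A.map (fstEl Y X p) a
          = A.map (copair hm (fstEl Y X p) (sndEl Y X p)) (A.map (inclExtend T m n) a₁)
        rw [← ha, ← FunctorToTypes.map_comp_apply, incl_copair]
      · apply Limits.terminal.hom_ext
    obtain ⟨h, -, huniq⟩ := hA m n Y f (Limits.terminal.from Y)
      (Limits.terminal.hom_ext _ _)
    have e1 : mkh a₁ = h := huniq _ (key a₁ rfl)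
    have e2 : mkh a₂ = h := huniq _ (key a₂ hEq.symm)
    have := congrArg (fun t => t.app T (𝟙 T)) (e1.trans e2.symm)
    simpa [mkh, FunctorToTypes.map_id_apply] using this
  · -- surjectivity
    intro a
    let f : Y ⊗ X ⟶ A :=
      { app := fun U => TypeCat.ofHom (fun p => A.map (copair hm (fstEl Y X p) (sndEl Y X p)) a)
        naturality := fun U V v => by
          ext p
          show A.map (copair hm (fstEl Y X p ≫ v) (sndEl Y X p ≫ v)) a
            = A.map v (A.map (copair hm (fstEl Y X p) (sndEl Y X p)) a)
          rw [← copair_comp, FunctorToTypes.map_comp_apply] }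
    obtain ⟨h, ⟨hfst, -⟩, -⟩ := hA m n Y f (Limits.terminal.from Y)
      (Limits.terminal.hom_ext _ _)
    refine ⟨h.app T (𝟙 T), ?_⟩
    have hnat := types_congr_hom (h.naturality (inclExtend T m n)) (𝟙 T)
    have hval := types_congr_hom (congrArg (fun t => t.app (T.extend m n)) hfst)
      (pairEl Y X (inclExtend T m n) (canSigma m hm n))
    -- hval : h.app T' (inclExtend T m n) = f.app T' (incl, can)
    have : h.app (T.extend m n) (inclExtend T m n)
        = A.map (copair hm (inclExtend T m n) (canSigma m hm n)) a := hval
    rw [copair_incl_can, FunctorToTypes.map_id_apply] at this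
    calc A.map (inclExtend T m n) (h.app T (𝟙 T))
        = h.app (T.extend m n) (Y.map (inclExtend T m n) (𝟙 T)) := hnat.symm
      _ = a := this


theorem bij_emptyTo {A : TimeObj C ⥤ Type}
    [Infinite C]
    (hA : InvariantUnderClockIntro (Limits.terminal.from A)) :
    ∀ (k : ℕ) (T : TimeObj C), T.E.card = k → Function.Bijective (A.map (emptyTo T)) := by
  intro k
  induction k with
  | zero =>
    intro T hT
    rw [Finset.card_eq_zero] at hT
    have habs : ∀ x : {x // x ∈ T.E}, False := fun x => by
      rw [hT] at x
      exact absurd x.2 (Finset.notMem_empty x.1)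
    let j' : T ⟶ emptyObj C := ⟨fun x => absurd (habs x) not_false,
      fun x => absurd (habs x) not_false⟩
    refine bij_of_iso A (emptyTo T) j' ?_ ?_
    · exact emptyTo_unique _ _
    · apply TimeHom.ext'
      funext x
      exact absurd (habs x) not_false
  | succ k ih =>
    intro T hT
    obtain ⟨c, hc⟩ := Finset.card_pos.mp (by omega : 0 < T.E.card)
    let T₀ : TimeObj C := ⟨T.E.erase c, fun x => T.d ⟨x.1, Finset.mem_of_mem_erase x.2⟩⟩
    have hm : c ∉ T₀.E := Finset.notMem_erase c T.E
    set n := T.d ⟨c, hc⟩ with hn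
    have hE : (T₀.extend c n).E = T.E := Finset.insert_erase hc
    have hd : ∀ (x : C) (h1 : x ∈ (T₀.extend c n).E) (h2 : x ∈ T.E),
        (T₀.extend c n).d ⟨x, h1⟩ = T.d ⟨x, h2⟩ := by
      intro x h1 h2
      show (if h : x ∈ T₀.E then T₀.d ⟨x, h⟩ else n) = T.d ⟨x, h2⟩
      by_cases h : x ∈ T₀.E
      · rw [dif_pos h]
      · rw [dif_neg h]
        have hx : x = c := by
          by_contra hne
          exact h (Finset.mem_erase.mpr ⟨hne, h2⟩)
        subst hx
        rfl
    let j : T₀.extend c n ⟶ T :=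
      ⟨fun x => ⟨x.1, hE ▸ x.2⟩, fun x => le_of_eq (hd x.1 x.2 (hE ▸ x.2)).symm⟩
    let j' : T ⟶ T₀.extend c n :=
      ⟨fun x => ⟨x.1, hE.symm ▸ x.2⟩, fun x => le_of_eq (hd x.1 (hE.symm ▸ x.2) x.2)⟩
    have hj1 : j ≫ j' = 𝟙 (T₀.extend c n) := by
      apply TimeHom.ext'; funext x; exact Subtype.ext rfl
    have hj2 : j' ≫ j = 𝟙 T := by
      apply TimeHom.ext'; funext x; exact Subtype.ext rfl
    have hcard : T₀.E.card = k := by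
      have := Finset.card_erase_of_mem hc
      simp only [T₀] at *
      omega
    have b1 := ih T₀ hcard
    have b2 := bij_inclExtend hA T₀ n hm
    have b3 := bij_of_iso A j j' hj1 hj2
    have hfac : emptyTo T = emptyTo T₀ ≫ inclExtend T₀ c n ≫ j := emptyTo_unique _ _
    rw [hfac, A.map_comp, A.map_comp]
    exact (b3.comp b2).comp b1


section Backward

variable [Infinite C] {S : Type} {Y : TimeObj C ⥤ Type} {l : C} {n : ℕ}

theorem constF_indep
    (F : Y ⊗ coyoneda.obj (op (single C l n)) ⟶ (Functor.const (TimeObj C)).obj S)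
    {T : TimeObj C} (z : Y.obj T) (σ σ' : single C l n ⟶ T) :
    F.app T (pairEl Y _ z σ) = F.app T (pairEl Y _ z σ') := by
  obtain ⟨m, hm⟩ := Infinite.exists_notMem_finset T.E
  have key : ∀ τ : single C l n ⟶ T,
      F.app T (pairEl Y (coyoneda.obj (op (single C l n))) z τ)
        = F.app (T.extend m n)
            (pairEl Y (coyoneda.obj (op (single C l n))) (Y.map (inclExtend T m n) z) (canSigma l hm n)) := by
    intro τ
    have hnat : F.app T ((Y ⊗ (coyoneda.obj (op (single C l n)))).map (copair hm (𝟙 T) τ)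
          (pairEl Y (coyoneda.obj (op (single C l n))) (Y.map (inclExtend T m n) z) (canSigma l hm n)))
        = F.app (T.extend m n)
            (pairEl Y (coyoneda.obj (op (single C l n))) (Y.map (inclExtend T m n) z) (canSigma l hm n)) :=
      types_congr_hom (F.naturality (copair hm (𝟙 T) τ))
        (pairEl Y (coyoneda.obj (op (single C l n))) (Y.map (inclExtend T m n) z) (canSigma l hm n))
    have hmap : (Y ⊗ (coyoneda.obj (op (single C l n)))).map (copair hm (𝟙 T) τ)
        (pairEl Y (coyoneda.obj (op (single C l n))) (Y.map (inclExtend T m n) z) (canSigma l hm n)) = pairEl Y (coyoneda.obj (op (single C l n))) z τ := by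
      show (Y.map (copair hm (𝟙 T) τ) (Y.map (inclExtend T m n) z),
            canSigma l hm n ≫ copair hm (𝟙 T) τ)
          = ((z, τ) : Y.obj T × (single C l n ⟶ T))
      rw [← FunctorToTypes.map_comp_apply, incl_copair, can_copair,
        FunctorToTypes.map_id_apply]
    rw [hmap] at hnat
    exact hnat
  rw [key σ, key σ']

theorem constF_eq
    (F : Y ⊗ coyoneda.obj (op (single C l n)) ⟶ (Functor.const (TimeObj C)).obj S)
    {T₁ T₂ : TimeObj C} (u : T₁ ⟶ T₂) (y : Y.obj T₁)
    (σ₁ : single C l n ⟶ T₁) (σ₂ : single C l n ⟶ T₂) :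
    F.app T₂ (pairEl Y _ (Y.map u y) σ₂) = F.app T₁ (pairEl Y _ y σ₁) := by
  have hnat : F.app T₂ ((Y ⊗ (coyoneda.obj (op (single C l n)))).map u (pairEl Y (coyoneda.obj (op (single C l n))) y σ₁)) = F.app T₁ (pairEl Y (coyoneda.obj (op (single C l n))) y σ₁) :=
    types_congr_hom (F.naturality u) (pairEl Y (coyoneda.obj (op (single C l n))) y σ₁)
  have hmap : (Y ⊗ (coyoneda.obj (op (single C l n)))).map u (pairEl Y (coyoneda.obj (op (single C l n))) y σ₁) = pairEl Y (coyoneda.obj (op (single C l n))) (Y.map u y) (σ₁ ≫ u) := rfl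
  rw [hmap] at hnat
  rw [← hnat]
  exact constF_indep F (Y.map u y) σ₂ (σ₁ ≫ u)

end Backward

theorem orth_of_const [Infinite C] {A : TimeObj C ⥤ Type} {S : Type}
    (e : A ≅ (Functor.const (TimeObj C)).obj S) :
    InvariantUnderClockIntro (Limits.terminal.from A) := by
  intro l n Y f g hsq
  set F : Y ⊗ (coyoneda.obj (op (single C l n))) ⟶ (Functor.const (TimeObj C)).obj S := f ≫ e.hom with hF
  let M : TimeObj C → C := fun T => (Infinite.exists_notMem_finset T.E).choose
  have hM : ∀ T : TimeObj C, M T ∉ T.E :=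
    fun T => (Infinite.exists_notMem_finset T.E).choose_spec
  let H : Y ⟶ (Functor.const (TimeObj C)).obj S :=
    { app := fun T => TypeCat.ofHom (fun z => F.app (T.extend (M T) n)
        (pairEl Y (coyoneda.obj (op (single C l n))) (Y.map (inclExtend T (M T) n) z) (canSigma l (hM T) n)))
      naturality := fun T U u => by
        ext z
        show F.app (U.extend (M U) n)
            (pairEl Y (coyoneda.obj (op (single C l n))) (Y.map (inclExtend U (M U) n) (Y.map u z)) (canSigma l (hM U) n))
          = F.app (T.extend (M T) n)
            (pairEl Y (coyoneda.obj (op (single C l n))) (Y.map (inclExtend T (M T) n) z) (canSigma l (hM T) n))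
        rw [← FunctorToTypes.map_comp_apply,
          ← incl_copair (hM T) (u ≫ inclExtend U (M U) n) (canSigma l (hM U) n),
          FunctorToTypes.map_comp_apply]
        exact constF_eq F _ _ (canSigma l (hM T) n) _ }
  have hHf : ∀ (T : TimeObj C) (z : Y.obj T) (σ : single C l n ⟶ T),
      H.app T z = F.app T (pairEl Y (coyoneda.obj (op (single C l n))) z σ) :=
    fun T z σ => constF_eq F (inclExtend T (M T) n) z σ (canSigma l (hM T) n)
  have hfstH : CartesianMonoidalCategory.fst Y (coyoneda.obj (op (single C l n))) ≫ H = F := by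
    apply NatTrans.ext; funext T; ext p
    show H.app T (fstEl Y (coyoneda.obj (op (single C l n))) p) = F.app T p
    exact hHf T (fstEl Y (coyoneda.obj (op (single C l n))) p) (sndEl Y (coyoneda.obj (op (single C l n))) p)
  refine ⟨H ≫ e.inv, ⟨?_, Limits.terminal.hom_ext _ _⟩, ?_⟩
  · calc CartesianMonoidalCategory.fst Y (coyoneda.obj (op (single C l n))) ≫ H ≫ e.inv
        = (CartesianMonoidalCategory.fst Y (coyoneda.obj (op (single C l n))) ≫ H) ≫ e.inv := by rw [Category.assoc]
      _ = (f ≫ e.hom) ≫ e.inv := by rw [hfstH, hF]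
      _ = f := by rw [Category.assoc, e.hom_inv_id, Category.comp_id]
  · rintro h' ⟨hfst, -⟩
    have h2 : CartesianMonoidalCategory.fst Y (coyoneda.obj (op (single C l n))) ≫ (h' ≫ e.hom) = F := by
      rw [← Category.assoc, hfst, hF]
    have hH' : h' ≫ e.hom = H := by
      apply NatTrans.ext; funext T; ext z
      have h1 : (h' ≫ e.hom).app (T.extend (M T) n) (Y.map (inclExtend T (M T) n) z)
          = (h' ≫ e.hom).app T z :=
        types_congr_hom ((h' ≫ e.hom).naturality (inclExtend T (M T) n)) z
      have h3 : (h' ≫ e.hom).app (T.extend (M T) n) (Y.map (inclExtend T (M T) n) z)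
          = F.app (T.extend (M T) n)
              (pairEl Y (coyoneda.obj (op (single C l n))) (Y.map (inclExtend T (M T) n) z) (canSigma l (hM T) n)) :=
        types_congr_hom (congrArg (fun t => t.app (T.extend (M T) n)) h2)
          (pairEl Y (coyoneda.obj (op (single C l n))) (Y.map (inclExtend T (M T) n) z) (canSigma l (hM T) n))
      show (h' ≫ e.hom).app T z = H.app T z
      rw [← h1]
      exact h3
    rw [← hH', Category.assoc, e.hom_inv_id, Category.comp_id]

theorem const_of_orth [Infinite C] {A : TimeObj C ⥤ Type}
    (hA : InvariantUnderClockIntro (Limits.terminal.from A)) :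
    ∃ S : Type, Nonempty (A ≅ (Functor.const (TimeObj C)).obj S) := by
  refine ⟨A.obj (emptyObj C), ⟨?_⟩⟩
  refine (NatIso.ofComponents
    (fun T => (Equiv.ofBijective (A.map (emptyTo T))
      (bij_emptyTo hA T.E.card T rfl)).toIso) ?_).symm
  intro T U u
  ext x
  show A.map (emptyTo U) x = A.map u (A.map (emptyTo T) x)
  rw [← FunctorToTypes.map_comp_apply]
  exact types_congr_hom (congrArg A.map (emptyTo_unique _ _)) x

end Statement7Aux

/-- For a presheaf `A` on 𝕋, the unique map `A ⟶ 1` is invariant under clock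
introduction iff `A` is isomorphic to a constant presheaf. -/
theorem statement_7 (C : Type) [Countable C] [Infinite C] (A : TimeObj C ⥤ Type) :
    InvariantUnderClockIntro (Limits.terminal.from A) ↔
      ∃ S : Type, Nonempty (A ≅ (Functor.const (TimeObj C)).obj S) := by
  letI : DecidableEq C := Classical.decEq C
  constructor
  · exact fun hA => Statement7Aux.const_of_orth hA
  · rintro ⟨S, ⟨e⟩⟩
    exact Statement7Aux.orth_of_const e
end

section
/- If a morphism p : A → B in Set^𝕋 is invariant under clock introduction, then p is orthogonal to the object of clocks 𝒞. -/
open CategoryTheory CategoryTheory.Limits Opposite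

open MonoidalCategory

/-- If a morphism of presheaves on 𝕋 is invariant under clock introduction, then it
is orthogonal to the object of clocks 𝒞. -/
theorem statement_9 (C : Type) [Countable C] [Infinite C]
    {A B : TimeObj C ⥤ Type} (p : A ⟶ B) (h : InvariantUnderClockIntro p) :
    OrthogonalTo p (Clocks C) := by
  obtain ⟨l⟩ : Nonempty C := inferInstance
  -- the comparison maps `y({l},n) ⟶ 𝒞`
  let j : ∀ n : ℕ, coyoneda.obj (op (single C l n)) ⟶ Clocks C := fun n =>
    { app := fun E => TypeCat.ofHom (fun σ => σ.toFun ⟨l, Finset.mem_singleton_self l⟩)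
      naturality := fun E E' τ => rfl }
  intro Y f g hsq
  have sq : ∀ n, ((Y ◁ j n) ≫ f) ≫ p =
      CartesianMonoidalCategory.fst Y (coyoneda.obj (op (single C l n))) ≫ g := by
    intro n
    rw [Category.assoc, hsq, ← Category.assoc]
    congr 1
  have HH : ∀ n, ∃ hh : Y ⟶ A,
      (CartesianMonoidalCategory.fst Y (coyoneda.obj (op (single C l n))) ≫ hh = (Y ◁ j n) ≫ f ∧
        hh ≫ p = g) ∧
      ∀ y, (CartesianMonoidalCategory.fst Y (coyoneda.obj (op (single C l n))) ≫ y = (Y ◁ j n) ≫ f ∧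
        y ≫ p = g) → y = hh :=
    fun n => h l n Y ((Y ◁ j n) ≫ f) g (sq n)
  choose H Hprop Huniq using HH
  -- elementwise form of the level-`n` condition
  have elt : ∀ (n : ℕ) (E : TimeObj C) (y : Y.obj E) (σ : single C l n ⟶ E),
      (H n).app E y = f.app E (y, σ.toFun ⟨l, Finset.mem_singleton_self l⟩) :=
    fun n E y σ => types_congr_hom (NatTrans.congr_app (Hprop n).1 E)
      (show (Y ⊗ coyoneda.obj (op (single C l n))).obj E from (y, σ))
  -- all the fillers agree
  have Heq : ∀ n, H n = H 0 := by
    intro n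
    refine Huniq 0 (H n) ⟨?_, (Hprop n).2⟩
    refine NatTrans.ext (funext fun E => ConcreteCategory.hom_ext _ _ fun z => ?_)
    exact elt n E z.1 ⟨(show TimeHom (single C l 0) E from z.2).toFun,
      fun x => ((show TimeHom (single C l 0) E from z.2).le x).trans (Nat.zero_le n)⟩
  refine ⟨H 0, ⟨?_, (Hprop 0).2⟩, ?_⟩
  · refine NatTrans.ext (funext fun E => ConcreteCategory.hom_ext _ _ fun z => ?_)
    have := elt (E.d z.2) E z.1 ⟨fun _ => z.2, fun x => le_refl _⟩
    rw [Heq (E.d z.2)] at this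
    exact this
  · rintro h' ⟨h'fst, h'p⟩
    refine Huniq 0 h' ⟨?_, h'p⟩
    refine NatTrans.ext (funext fun E => ConcreteCategory.hom_ext _ _ fun z => ?_)
    exact types_congr_hom (NatTrans.congr_app h'fst E)
      (z.1, (show TimeHom (single C l 0) E from z.2).toFun ⟨l, Finset.mem_singleton_self l⟩)
end
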